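/- Let P be a normed space, suppose that for every λ ∈ Λ there exists d(λ) ≥ 0 with |⟨λ,p⟩| ≤ d(λ)‖p‖ for all p ∈ P, and that limsup_{p → 0} σ(p)/‖p‖ < +∞. Then for the existence of an augmented Lagrange multiplier of the problem of minimizing f over A it is necessary that there exists a neighbourhood U ⊆ P of zero such that the penalty function F₁(x, r, U) := inf_{p ∈ U} (Φ(x,p) + r‖p‖) is exact, i.e. there exists r ≥ 0 with F₁(x, r, U) ≥ f* for all x ∈ A. -/

import Mathlib

open Filter Topology Bornology Set

noncomputable section

/-- The augmented Lagrangian `𝓛(x, λ, r) = inf_p (Φ(x,p) − ⟨λ,p⟩ + r σ(p))`. -/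
def AugLagr {X P L : Type*} [AddCommGroup P] [Module ℝ P] [AddCommGroup L] [Module ℝ L]
    (Φ : X × P → EReal) (B : L →ₗ[ℝ] P →ₗ[ℝ] ℝ) (σ : P → EReal)
    (x : X) (lam : L) (r : ℝ) : EReal :=
  ⨅ p : P, Φ (x, p) - ((B lam p : ℝ) : EReal) + (r : EReal) * σ p

/-- The optimal value (perturbation) function `v(p) = inf_{x ∈ A} Φ(x,p)`. -/
def OptVal {X P : Type*} (A : Set X) (Φ : X × P → EReal) (p : P) : EReal :=
  ⨅ x ∈ A, Φ (x, p)

/-- `λ` is an augmented Lagrange multiplier: for some `r ≥ 0`,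
`v(p) ≥ v(0) + ⟨λ,p⟩ − r σ(p)` for all `p`. -/
def IsAugMult {X P L : Type*} [AddCommGroup P] [Module ℝ P] [AddCommGroup L] [Module ℝ L]
    (A : Set X) (Φ : X × P → EReal) (B : L →ₗ[ℝ] P →ₗ[ℝ] ℝ) (σ : P → EReal) (lam : L) : Prop :=
  ∃ r : ℝ, 0 ≤ r ∧
    ∀ p : P, OptVal A Φ 0 + ((B lam p : ℝ) : EReal) - (r : EReal) * σ p ≤ OptVal A Φ p

/-- The least exact penalty parameter `r(λ)`. -/
def rmin {X P L : Type*} [AddCommGroup P] [Module ℝ P] [AddCommGroup L] [Module ℝ L]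
    (A : Set X) (Φ : X × P → EReal) (B : L →ₗ[ℝ] P →ₗ[ℝ] ℝ) (σ : P → EReal) (lam : L) : ℝ :=
  sInf {r : ℝ | 0 ≤ r ∧
    ∀ p : P, OptVal A Φ 0 + ((B lam p : ℝ) : EReal) - (r : EReal) * σ p ≤ OptVal A Φ p}

/-- The augmented dual function `ψ(λ, r) = inf_{x ∈ A} 𝓛(x, λ, r)`. -/
def DualFun {X P L : Type*} [AddCommGroup P] [Module ℝ P] [AddCommGroup L] [Module ℝ L]
    (A : Set X) (Φ : X × P → EReal) (B : L →ₗ[ℝ] P →ₗ[ℝ] ℝ) (σ : P → EReal)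
    (lam : L) (r : ℝ) : EReal :=
  ⨅ x ∈ A, AugLagr Φ B σ x lam r

/-- `λ` is a local augmented Lagrange multiplier at `xs`. -/
def IsLocalAugMult {X P L : Type*} [TopologicalSpace X]
    [AddCommGroup P] [Module ℝ P] [AddCommGroup L] [Module ℝ L]
    (A : Set X) (f : X → EReal) (Φ : X × P → EReal)
    (B : L →ₗ[ℝ] P →ₗ[ℝ] ℝ) (σ : P → EReal) (xs : X) (lam : L) : Prop :=
  ∃ r₀ : ℝ, 0 ≤ r₀ ∧ ∀ r : ℝ, r₀ ≤ r →
    (∃ U ∈ 𝓝 xs, ∀ x ∈ U ∩ A, AugLagr Φ B σ xs lam r ≤ AugLagr Φ B σ x lam r) ∧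
    AugLagr Φ B σ xs lam r = f xs

/-- `𝒜_loc`: the set of multipliers that are local augmented Lagrange multipliers at every
globally optimal solution of the problem. -/
def Aloc {X P L : Type*} [TopologicalSpace X]
    [AddCommGroup P] [Module ℝ P] [AddCommGroup L] [Module ℝ L]
    (A : Set X) (f : X → EReal) (Φ : X × P → EReal)
    (B : L →ₗ[ℝ] P →ₗ[ℝ] ℝ) (σ : P → EReal) : Set L :=
  {lam | ∀ xs ∈ A, (∀ x ∈ A, f xs ≤ f x) → IsLocalAugMult A f Φ B σ xs lam}

/-- Suppose `P` is normed, the coupling is dominated by the norm and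
`limsup_{p → 0} σ(p)/‖p‖ < +∞`. Then the existence of an augmented Lagrange multiplier implies
that the penalty function `F₁(x, r, U) = inf_{p ∈ U} (Φ(x,p) + r‖p‖)` is exact for some
neighbourhood `U` of zero. -/
theorem aug_mult_exists_implies_norm_penalty_exact
    {X P L : Type*} [TopologicalSpace X]
    [NormedAddCommGroup P] [NormedSpace ℝ P]
    [AddCommGroup L] [Module ℝ L]
    (A : Set X) (f : X → EReal) (Φ : X × P → EReal)
    (B : L →ₗ[ℝ] P →ₗ[ℝ] ℝ) (σ : P → EReal)
    (hA : A.Nonempty) (hdom : ∃ x ∈ A, f x ≠ ⊤) (hfbot : ∀ x, f x ≠ ⊥)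
    (hfin : ∃ c : ℝ, (⨅ x ∈ A, f x) = (c : EReal))
    (hΦ : ∀ x, Φ (x, 0) = f x)
    (hσ0 : σ (0 : P) = 0) (hσpos : ∀ p : P, p ≠ 0 → 0 < σ p)
    (hB : ∀ lam : L, ∃ dl : ℝ, 0 ≤ dl ∧ ∀ p : P, |B lam p| ≤ dl * ‖p‖)
    (hlimsup : Filter.limsup (fun p : P => (((‖p‖)⁻¹ : ℝ) : EReal) * σ p) (𝓝[≠] (0 : P)) < ⊤)
    (hexists : ∃ lam : L, IsAugMult A Φ B σ lam) :
    ∃ U ∈ 𝓝 (0 : P), ∃ r : ℝ, 0 ≤ r ∧ ∀ x ∈ A,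
      (⨅ y ∈ A, f y) ≤ ⨅ p ∈ U, Φ (x, p) + (r : EReal) * ((‖p‖ : ℝ) : EReal) := by
  
  classical
  obtain ⟨lam, r, hr0, hmult⟩ := hexists
  obtain ⟨d, hd0, hdB⟩ := hB lam
  obtain ⟨c, hc⟩ := hfin
  obtain ⟨M, hM, -⟩ := EReal.exists_between_coe_real hlimsup
  have hev := Filter.eventually_lt_of_limsup_lt hM
  rw [eventually_nhdsWithin_iff] at hev
  obtain ⟨U, hU, hU'⟩ := hev.exists_mem
  set M' : ℝ := max M 0 with hM'def
  have hM'0 : 0 ≤ M' := le_max_right M 0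
  set r' : ℝ := d + r * M' with hr'def
  have hr'0 : 0 ≤ r' := by positivity
  have hv0 : OptVal A Φ 0 = (c : EReal) := by
    rw [← hc]; simp only [OptVal, hΦ]
  refine ⟨U, hU, r', hr'0, fun x hx => ?_⟩
  rw [hc]
  refine le_iInf₂ fun p hp => ?_
  by_cases hp0 : p = 0
  · subst hp0
    have hfx : (c : EReal) ≤ f x := hc ▸ iInf₂_le x hx
    simpa [hΦ] using hfx
  · have hσlt := hU' p hp hp0
    have hσ0' : (0 : EReal) ≤ σ p := (hσpos p hp0).le
    have hnp : (0 : ℝ) < ‖p‖ := norm_pos_iff.mpr hp0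
    have h1 : (((‖p‖)⁻¹ : ℝ) : EReal) * σ p ≤ (M' : EReal) :=
      le_trans hσlt.le (EReal.coe_le_coe_iff.mpr (le_max_left M 0))
    have hσle : σ p ≤ ((M' * ‖p‖ : ℝ) : EReal) := by
      calc σ p = ((‖p‖ : ℝ) : EReal) * ((((‖p‖)⁻¹ : ℝ) : EReal) * σ p) := by
            rw [← mul_assoc, ← EReal.coe_mul, mul_inv_cancel₀ hnp.ne', EReal.coe_one, one_mul]
        _ ≤ ((‖p‖ : ℝ) : EReal) * (M' : EReal) :=
            mul_le_mul_of_nonneg_left h1 (by exact_mod_cast hnp.le)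
        _ = ((M' * ‖p‖ : ℝ) : EReal) := by rw [← EReal.coe_mul, mul_comm]
    have hσtop : σ p ≠ ⊤ := by
      intro h; rw [h] at hσle; exact absurd hσle (not_le.mpr (EReal.coe_lt_top _))
    have hσbot : σ p ≠ ⊥ := by
      intro h; rw [h] at hσ0'; exact absurd hσ0' (by simp)
    set t := (σ p).toReal with htdef
    have ht : σ p = (t : EReal) := (EReal.coe_toReal hσtop hσbot).symm
    have htle : t ≤ M' * ‖p‖ := by rw [ht] at hσle; exact_mod_cast hσle
    have ht0 : (0:ℝ) ≤ t := by rw [ht] at hσ0'; exact_mod_cast hσ0'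
    have hm := hmult p
    rw [hv0, ht] at hm
    have hm' : ((c + B lam p - r * t : ℝ) : EReal) ≤ OptVal A Φ p := by
      exact_mod_cast hm
    have hΦge : OptVal A Φ p ≤ Φ (x, p) := iInf₂_le x hx
    have key : ((c + B lam p - r * t : ℝ) : EReal) ≤ Φ (x, p) := hm'.trans hΦge
    have key2 := add_le_add_left key ((r * t - B lam p : ℝ) : EReal)
    have hcoe : ((c + B lam p - r * t : ℝ) : EReal) + ((r * t - B lam p : ℝ) : EReal)
        = (c : EReal) := by
      rw [← EReal.coe_add]; norm_num
    rw [hcoe] at key2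
    refine key2.trans (add_le_add_right ?_ _)
    rw [← EReal.coe_mul]
    have hreal : r * t - B lam p ≤ r' * ‖p‖ := by
      have h2 : r * t ≤ r * (M' * ‖p‖) := mul_le_mul_of_nonneg_left htle hr0
      have h3 : -B lam p ≤ d * ‖p‖ := (neg_le_abs _).trans (hdB p)
      rw [hr'def]; nlinarith
    exact_mod_cast hreal
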